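/- Let θ : ℝ → ℝ satisfy θ(0) = θ₀ and θ'(s) = f(θ(s)) for all s ∈ ℝ, and suppose f(θ₀) ≠ 0. Then there exist θ₁ < θ₀ < θ₂ with f(θ₁) = f(θ₂) = 0 and f of constant sign on (θ₁, θ₂), such that: if f(θ₀) > 0 then θ(s) → θ₂ as s → +∞ and θ(s) → θ₁ as s → −∞; if f(θ₀) < 0 then θ(s) → θ₁ as s → +∞ and θ(s) → θ₂ as s → −∞. In particular the limits of θ at ±∞ exist, are finite, and are zeros of f. -/

import Mathlib

open Real Filter Topology Set

lemma aux_const {f : ℝ → ℝ} (hfc : ∀ x, ContDiffAt ℝ 1 f x) {c : ℝ} (hc : f c = 0)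
    {θ : ℝ → ℝ} (hθ : ∀ s, HasDerivAt θ (f (θ s)) s) {s₀ : ℝ} (h : θ s₀ = c) :
    ∀ s, θ s = c := by
  have hcont : Continuous θ := by
    rw [continuous_iff_continuousAt]; exact fun s => (hθ s).continuousAt
  have hclosed : IsClosed {s | θ s = c} := isClosed_eq hcont continuous_const
  have hopen : IsOpen {s | θ s = c} := by
    rw [isOpen_iff_mem_nhds]
    intro s₁ hs₁
    obtain ⟨K, t, ht, hlip⟩ := (hfc c).exists_lipschitzOnWith
    have key : θ =ᶠ[𝓝 s₁] (fun _ => c) := by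
      apply ODE_solution_unique_of_eventually (v := fun _ x => f x) (s := fun _ => t)
        (Filter.Eventually.of_forall fun _ => hlip) ?_ ?_ (by simpa using hs₁)
      · have htend : Tendsto θ (𝓝 s₁) (𝓝 c) := by
          have : Tendsto θ (𝓝 s₁) (𝓝 (θ s₁)) := hcont.continuousAt
          rwa [show θ s₁ = c from hs₁] at this
        filter_upwards [htend ht] with r hr using ⟨hθ r, hr⟩
      · filter_upwards with r
        exact ⟨by simpa [hc] using hasDerivAt_const r c, mem_of_mem_nhds ht⟩
    exact key
  have : {s | θ s = c} = ∅ ∨ {s | θ s = c} = univ := isClopen_iff.mp ⟨hclosed, hopen⟩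
  rcases this with h' | h'
  · exact absurd (h' ▸ h : s₀ ∈ (∅ : Set ℝ)) (notMem_empty s₀)
  · intro s; exact (h' ▸ mem_univ s : s ∈ {s | θ s = c})

lemma aux_forward {f : ℝ → ℝ} (hfc : ∀ x, ContDiffAt ℝ 1 f x) {θ₁ θ₂ : ℝ}
    (h1 : f θ₁ = 0) (h2 : f θ₂ = 0) (hpos : ∀ x ∈ Set.Ioo θ₁ θ₂, 0 < f x)
    {θ : ℝ → ℝ} (hθ : ∀ s, HasDerivAt θ (f (θ s)) s) (h0 : θ 0 ∈ Set.Ioo θ₁ θ₂) :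
    Tendsto θ atTop (𝓝 θ₂) := by
  have hcont : Continuous θ := by
    rw [continuous_iff_continuousAt]; exact fun s => (hθ s).continuousAt
  have hne2 : ∀ s, θ s ≠ θ₂ := fun s hs => h0.2.ne (aux_const hfc h2 hθ hs 0)
  have hne1 : ∀ s, θ s ≠ θ₁ := fun s hs => h0.1.ne' (aux_const hfc h1 hθ hs 0)
  have hmem : ∀ s, θ s ∈ Set.Ioo θ₁ θ₂ := by
    intro s
    constructor
    · by_contra hle
      push_neg at hle
      have hlt : θ s < θ₁ := lt_of_le_of_ne hle (hne1 s)
      have : θ₁ ∈ θ '' uIcc 0 s := by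
        apply intermediate_value_uIcc hcont.continuousOn
        exact Set.mem_uIcc.mpr (Or.inr ⟨hlt.le, h0.1.le⟩)
      obtain ⟨s', _, hs'⟩ := this
      exact hne1 s' hs'
    · by_contra hle
      push_neg at hle
      have hlt : θ₂ < θ s := lt_of_le_of_ne hle (hne2 s).symm
      have : θ₂ ∈ θ '' uIcc 0 s := by
        apply intermediate_value_uIcc hcont.continuousOn
        exact Set.mem_uIcc.mpr (Or.inl ⟨h0.2.le, hlt.le⟩)
      obtain ⟨s', _, hs'⟩ := this
      exact hne2 s' hs'
  have hmono : StrictMono θ := by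
    apply strictMono_of_deriv_pos
    intro s
    rw [(hθ s).deriv]
    exact hpos _ (hmem s)
  have hbdd : BddAbove (Set.range θ) := ⟨θ₂, by rintro _ ⟨s, rfl⟩; exact (hmem s).2.le⟩
  have hL : Tendsto θ atTop (𝓝 (⨆ s, θ s)) := tendsto_atTop_ciSup hmono.monotone hbdd
  set L := ⨆ s, θ s with hLdef
  have hLle : L ≤ θ₂ := ciSup_le fun s => (hmem s).2.le
  have hLgt : θ₁ < L := lt_of_lt_of_le h0.1 (le_ciSup hbdd 0)
  have hcomp : Tendsto (fun s => f (θ s)) atTop (𝓝 (f L)) :=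
    ((hfc L).continuousAt.tendsto).comp hL
  have hfL : f L = 0 := by
    by_contra hfL0
    have hfLpos : 0 < f L := by
      rcases lt_or_gt_of_ne hfL0 with h | h
      · exfalso
        have : 0 ≤ f L := le_of_tendsto_of_tendsto' tendsto_const_nhds hcomp
          (fun s => (hpos _ (hmem s)).le)
        linarith
      · exact h
    -- eventually the derivative is at least f L / 2, forcing θ to exceed θ₂
    have hev : ∀ᶠ s in atTop, f L / 2 < f (θ s) :=
      hcomp.eventually (eventually_gt_nhds (by linarith))
    obtain ⟨s₁, hs₁⟩ := hev.exists_forall_of_atTop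
    have hdiff : Differentiable ℝ θ := fun s => (hθ s).differentiableAt
    have hgrow := (convex_Ici s₁).mul_sub_le_image_sub_of_le_deriv
      hcont.continuousOn (hdiff.differentiableOn) (C := f L / 2)
      (fun x hx => by
        rw [(hθ x).deriv]
        rw [interior_Ici] at hx
        exact (hs₁ x (le_of_lt hx)).le)
    set y := s₁ + 2 * (θ₂ - θ₁) / (f L / 2) + 1 with hy
    have hy1 : s₁ ≤ y := by
      have : 0 ≤ 2 * (θ₂ - θ₁) / (f L / 2) := by
        apply div_nonneg
        · have := h0.1.trans h0.2; linarith
        · linarith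
      simp [hy]; linarith
    have hkey := hgrow s₁ (Set.self_mem_Ici) y hy1 hy1
    have h1' : θ₁ < θ s₁ := (hmem s₁).1
    have h2' : θ y ≤ θ₂ := (hmem y).2.le
    have hylb : f L / 2 * (y - s₁) = 2 * (θ₂ - θ₁) + f L / 2 := by
      rw [hy]
      field_simp
      ring
    rw [hylb] at hkey
    have hI : θ₁ < θ₂ := h0.1.trans h0.2
    nlinarith
  have : L = θ₂ := by
    rcases eq_or_lt_of_le hLle with h | h
    · exact h
    · exact absurd hfL (hpos L ⟨hLgt, h⟩).ne'
  rwa [this] at hL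

lemma aux_flow {f : ℝ → ℝ} (hfc : ∀ x, ContDiffAt ℝ 1 f x) {θ₁ θ₂ : ℝ}
    (h1 : f θ₁ = 0) (h2 : f θ₂ = 0) (hpos : ∀ x ∈ Set.Ioo θ₁ θ₂, 0 < f x)
    {θ : ℝ → ℝ} (hθ : ∀ s, HasDerivAt θ (f (θ s)) s) (h0 : θ 0 ∈ Set.Ioo θ₁ θ₂) :
    Tendsto θ atTop (𝓝 θ₂) ∧ Tendsto θ atBot (𝓝 θ₁) := by
  refine ⟨aux_forward hfc h1 h2 hpos hθ h0, ?_⟩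
  -- reflect: ψ s = -θ (-s) solves ψ' = F ψ with F x = f (-x)
  set F : ℝ → ℝ := fun x => f (-x) with hF
  have hFc : ∀ x, ContDiffAt ℝ 1 F x := fun x =>
    (hfc (-x)).comp x (contDiff_neg.contDiffAt)
  set ψ : ℝ → ℝ := fun s => -θ (-s) with hψ
  have hψd : ∀ s, HasDerivAt ψ (F (ψ s)) s := by
    intro s
    have h₁ : HasDerivAt (fun s : ℝ => θ (-s)) (f (θ (-s)) * (-1)) s :=
      (hθ (-s)).comp s (hasDerivAt_neg s)
    have h₂ := h₁.neg
    have : F (ψ s) = -(f (θ (-s)) * (-1)) := by simp [hF, hψ]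
    rw [this]
    exact h₂
  have hψ0 : ψ 0 ∈ Set.Ioo (-θ₂) (-θ₁) := by
    simp only [hψ, neg_zero, Set.mem_Ioo, neg_lt_neg_iff]
    exact ⟨h0.2, h0.1⟩
  have hFpos : ∀ x ∈ Set.Ioo (-θ₂) (-θ₁), 0 < F x := by
    intro x hx
    exact hpos (-x) ⟨by linarith [hx.2], by linarith [hx.1]⟩
  have := aux_forward hFc (by simp [hF, h2]) (by simp [hF, h1]) hFpos hψd hψ0
  -- Tendsto ψ atTop (𝓝 (-θ₁))
  have h' : Tendsto (fun s => θ (-s)) atTop (𝓝 θ₁) := by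
    have := this.neg
    simpa [hψ] using this
  have hcomp := h'.comp (tendsto_neg_atBot_atTop (G := ℝ))
  have : ((fun s => θ (-s)) ∘ Neg.neg) = θ := by funext s; simp
  rwa [this] at hcomp

lemma zeros_aux {μ c : ℝ} {f : ℝ → ℝ} (hf : ∀ x, f x = μ * Real.cos x - (x - c) * Real.sin x)
    (b : ℝ) : (∃ z, b < z ∧ f z = 0) ∧ (∃ z, z < b ∧ f z = 0) := by
  have hfc : Continuous f := by
    have : f = fun x => μ * Real.cos x - (x - c) * Real.sin x := funext hf
    rw [this]; fun_prop
  have hπ : (0:ℝ) < π := Real.pi_pos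
  constructor
  · obtain ⟨k, hk⟩ := exists_int_gt ((max b c + π / 2) / (2 * π))
    have hk2 : max b c + π / 2 < k * (2 * π) := by
      rw [div_lt_iff₀ (by linarith)] at hk; linarith
    set a₁ : ℝ := -(π/2) + k * (2 * π) with ha₁
    set a₂ : ℝ := π/2 + k * (2 * π) with ha₂
    have hb1 : b < a₁ := by
      have := le_max_left b c; simp only [ha₁]; linarith
    have hc1 : c < a₁ := by
      have := le_max_right b c; simp only [ha₁]; linarith
    have h12 : a₁ ≤ a₂ := by simp only [ha₁, ha₂]; linarith
    have hv1 : f a₁ = a₁ - c := by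
      rw [hf, ha₁, Real.cos_add_int_mul_two_pi, Real.sin_add_int_mul_two_pi]
      simp
    have hv2 : f a₂ = -(a₂ - c) := by
      rw [hf, ha₂, Real.cos_add_int_mul_two_pi, Real.sin_add_int_mul_two_pi]
      simp
    have h0mem : (0:ℝ) ∈ Set.Icc (f a₂) (f a₁) := by
      rw [hv1, hv2]
      constructor <;> [skip; skip] <;> · simp only [ha₁, ha₂] at *; linarith
    obtain ⟨z, hz, hz0⟩ := intermediate_value_Icc' h12 hfc.continuousOn h0mem
    exact ⟨z, lt_of_lt_of_le hb1 hz.1, hz0⟩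
  · obtain ⟨k, hk⟩ := exists_int_lt ((min b c - π / 2) / (2 * π))
    have hk2 : k * (2 * π) < min b c - π / 2 := by
      rw [lt_div_iff₀ (by linarith)] at hk; linarith
    set a₁ : ℝ := -(π/2) + k * (2 * π) with ha₁
    set a₂ : ℝ := π/2 + k * (2 * π) with ha₂
    have hb2 : a₂ < b := by
      have := min_le_left b c; simp only [ha₂]; linarith
    have hc2 : a₂ < c := by
      have := min_le_right b c; simp only [ha₂]; linarith
    have h12 : a₁ ≤ a₂ := by simp only [ha₁, ha₂]; linarith
    have hv1 : f a₁ = a₁ - c := by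
      rw [hf, ha₁, Real.cos_add_int_mul_two_pi, Real.sin_add_int_mul_two_pi]
      simp
    have hv2 : f a₂ = -(a₂ - c) := by
      rw [hf, ha₂, Real.cos_add_int_mul_two_pi, Real.sin_add_int_mul_two_pi]
      simp
    have h0mem : (0:ℝ) ∈ Set.Icc (f a₁) (f a₂) := by
      rw [hv1, hv2]
      constructor <;> · simp only [ha₁, ha₂] at *; linarith
    obtain ⟨z, hz, hz0⟩ := intermediate_value_Icc h12 hfc.continuousOn h0mem
    exact ⟨z, lt_of_le_of_lt hz.2 hb2, hz0⟩

lemma sign_const {f : ℝ → ℝ} (hfcont : Continuous f) {a b : ℝ}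
    (hno : ∀ x ∈ Set.Ioo a b, f x ≠ 0)
    {x₀ : ℝ} (h₀ : x₀ ∈ Set.Ioo a b) (hpos : 0 < f x₀) : ∀ x ∈ Set.Ioo a b, 0 < f x := by
  intro x hx
  by_contra h
  push_neg at h
  have hlt : f x < 0 := lt_of_le_of_ne h (hno x hx)
  have : (0:ℝ) ∈ f '' uIcc x x₀ := by
    apply intermediate_value_uIcc hfcont.continuousOn
    exact Set.mem_uIcc.mpr (Or.inl ⟨hlt.le, hpos.le⟩)
  obtain ⟨z, hz, hz0⟩ := this
  rcases Set.mem_uIcc.mp hz with ⟨hz1, hz2⟩ | ⟨hz1, hz2⟩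
  · exact hno z ⟨lt_of_lt_of_le hx.1 hz1, lt_of_le_of_lt hz2 h₀.2⟩ hz0
  · exact hno z ⟨lt_of_lt_of_le h₀.1 hz1, lt_of_le_of_lt hz2 hx.2⟩ hz0

theorem stmt6 (lam μ θ₀ : ℝ) (f : ℝ → ℝ)
    (hf : ∀ θ : ℝ, f θ = μ * Real.cos θ - (θ - θ₀ + lam) * Real.sin θ)
    (θ : ℝ → ℝ) (hθ0 : θ 0 = θ₀) (hθ : ∀ s : ℝ, HasDerivAt θ (f (θ s)) s)
    (hne : f θ₀ ≠ 0) :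
    ∃ θ₁ θ₂ : ℝ, θ₁ < θ₀ ∧ θ₀ < θ₂ ∧ f θ₁ = 0 ∧ f θ₂ = 0 ∧
      ((∀ x ∈ Set.Ioo θ₁ θ₂, 0 < f x) ∨ (∀ x ∈ Set.Ioo θ₁ θ₂, f x < 0)) ∧
      (0 < f θ₀ →
        Tendsto θ atTop (𝓝 θ₂) ∧ Tendsto θ atBot (𝓝 θ₁)) ∧
      (f θ₀ < 0 →
        Tendsto θ atTop (𝓝 θ₁) ∧ Tendsto θ atBot (𝓝 θ₂)) := by
  have hfp : ∀ x, f x = μ * Real.cos x - (x - (θ₀ - lam)) * Real.sin x := by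
    intro x; rw [hf]; ring
  have hfeq : f = fun x => μ * Real.cos x - (x - (θ₀ - lam)) * Real.sin x := funext hfp
  have hC : ContDiff ℝ 1 f := by
    rw [hfeq]
    exact (contDiff_const.mul Real.contDiff_cos).sub
      ((contDiff_id.sub contDiff_const).mul Real.contDiff_sin)
  have hfC : ∀ x, ContDiffAt ℝ 1 f x := fun x => hC.contDiffAt
  have hfcont : Continuous f := hC.continuous
  obtain ⟨⟨z₂, hz₂b, hz₂0⟩, ⟨z₁, hz₁b, hz₁0⟩⟩ := zeros_aux hfp θ₀
  -- θ₂ : smallest zero ≥ θ₀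
  set S₂ : Set ℝ := Set.Ici θ₀ ∩ f ⁻¹' {0} with hS₂
  have hS₂closed : IsClosed S₂ := isClosed_Ici.inter (isClosed_singleton.preimage hfcont)
  have hS₂ne : S₂.Nonempty := ⟨z₂, hz₂b.le, hz₂0⟩
  have hS₂bdd : BddBelow S₂ := ⟨θ₀, fun x hx => hx.1⟩
  set θ₂ : ℝ := sInf S₂ with hθ₂def
  have hmem2 : θ₂ ∈ S₂ := hS₂closed.csInf_mem hS₂ne hS₂bdd
  have hf2 : f θ₂ = 0 := hmem2.2
  have hθ₂gt : θ₀ < θ₂ := lt_of_le_of_ne hmem2.1 (fun h => hne (h ▸ hf2))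
  have hmin2 : ∀ x, θ₀ ≤ x → f x = 0 → θ₂ ≤ x := fun x h1 h2 =>
    csInf_le hS₂bdd ⟨h1, h2⟩
  -- θ₁ : largest zero ≤ θ₀
  set S₁ : Set ℝ := Set.Iic θ₀ ∩ f ⁻¹' {0} with hS₁
  have hS₁closed : IsClosed S₁ := isClosed_Iic.inter (isClosed_singleton.preimage hfcont)
  have hS₁ne : S₁.Nonempty := ⟨z₁, hz₁b.le, hz₁0⟩
  have hS₁bdd : BddAbove S₁ := ⟨θ₀, fun x hx => hx.1⟩
  set θ₁ : ℝ := sSup S₁ with hθ₁def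
  have hmem1 : θ₁ ∈ S₁ := hS₁closed.csSup_mem hS₁ne hS₁bdd
  have hf1 : f θ₁ = 0 := hmem1.2
  have hθ₁lt : θ₁ < θ₀ := lt_of_le_of_ne hmem1.1 (fun h => hne (h ▸ hf1))
  have hmax1 : ∀ x, x ≤ θ₀ → f x = 0 → x ≤ θ₁ := fun x h1 h2 =>
    le_csSup hS₁bdd ⟨h1, h2⟩
  have hnozero : ∀ x ∈ Set.Ioo θ₁ θ₂, f x ≠ 0 := by
    intro x hx hx0
    rcases le_total θ₀ x with h | h
    · exact absurd hx.2 (not_lt.mpr (hmin2 x h hx0))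
    · exact absurd hx.1 (not_lt.mpr (hmax1 x h hx0))
  have h0mem : θ₀ ∈ Set.Ioo θ₁ θ₂ := ⟨hθ₁lt, hθ₂gt⟩
  have hθ0mem : θ 0 ∈ Set.Ioo θ₁ θ₂ := by rw [hθ0]; exact h0mem
  rcases lt_or_gt_of_ne hne with hneg | hpos
  · -- f θ₀ < 0
    have hsign' := sign_const hfcont.neg
      (fun x hx => neg_ne_zero.mpr (hnozero x hx)) h0mem (neg_pos.mpr hneg)
    have hsigneg : ∀ x ∈ Set.Ioo θ₁ θ₂, f x < 0 := fun x hx => neg_pos.mp (hsign' x hx)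
    -- reflect in space: η s = -θ s solves η' = F η with F x = -f (-x)
    set F : ℝ → ℝ := fun x => -f (-x) with hF
    have hFc : ∀ x, ContDiffAt ℝ 1 F x := fun x =>
      ((hfC (-x)).comp x contDiff_neg.contDiffAt).neg
    set η : ℝ → ℝ := fun s => -θ s with hη
    have hηd : ∀ s, HasDerivAt η (F (η s)) s := by
      intro s
      have := (hθ s).neg
      have heq : F (η s) = -f (θ s) := by simp [hF, hη]
      rw [heq]
      exact this
    have hη0 : η 0 ∈ Set.Ioo (-θ₂) (-θ₁) := by
      simp only [hη, hθ0, Set.mem_Ioo, neg_lt_neg_iff]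
      exact ⟨hθ₂gt, hθ₁lt⟩
    have hFpos : ∀ x ∈ Set.Ioo (-θ₂) (-θ₁), 0 < F x := by
      intro x hx
      exact neg_pos.mpr (hsigneg (-x) ⟨by linarith [hx.2], by linarith [hx.1]⟩)
    have hflow := aux_flow hFc (by simp [hF, hf2]) (by simp [hF, hf1]) hFpos hηd hη0
    have ht1 : Tendsto θ atTop (𝓝 θ₁) := by
      have := hflow.1.neg
      simpa [hη] using this
    have ht2 : Tendsto θ atBot (𝓝 θ₂) := by
      have := hflow.2.neg
      simpa [hη] using this
    exact ⟨θ₁, θ₂, hθ₁lt, hθ₂gt, hf1, hf2, Or.inr hsigneg,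
      fun h => absurd h (not_lt.mpr hneg.le), fun _ => ⟨ht1, ht2⟩⟩
  · -- 0 < f θ₀
    have hsign := sign_const hfcont hnozero h0mem hpos
    have hflow := aux_flow hfC hf1 hf2 hsign hθ hθ0mem
    exact ⟨θ₁, θ₂, hθ₁lt, hθ₂gt, hf1, hf2, Or.inl hsign,
      fun _ => hflow, fun h => absurd h (not_lt.mpr hpos.le)⟩
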